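/- arXiv:2009.03056 — 3 statements merged into one kernel-verified Lean document; each statement's English description precedes it below -/
import Mathlib

section
/- Let A be a finite subset of ℝ^m, C = cone(A), L₀ = C ∩ (−C) its lineality space, and A₀ = {x ∈ A : −x ∈ C}. Then L₀ = cone(A₀) = lin(A₀). -/
open Set Filter Topology MeasureTheory ProbabilityTheory Pointwise

noncomputable section

/-- Coercion of an integer vector to a real vector. -/
def zc {m : ℕ} (x : Fin m → ℤ) : Fin m → ℝ := fun i => (x i : ℝ)

/-- Convex conical hull: all finite nonnegative real combinations of elements of `A`. -/
def coneHull {m : ℕ} (A : Set (Fin m → ℝ)) : Set (Fin m → ℝ) :=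
  { x | ∃ (s : Finset (Fin m → ℝ)) (w : (Fin m → ℝ) → ℝ),
      ↑s ⊆ A ∧ (∀ a ∈ s, 0 ≤ w a) ∧ x = ∑ a ∈ s, w a • a }

section Aux

variable {m : ℕ}

lemma mem_coneHull_of_mem {A : Set (Fin m → ℝ)} {a : Fin m → ℝ} (ha : a ∈ A) :
    a ∈ coneHull A :=
  ⟨{a}, fun _ => 1, by simpa using ha, fun _ _ => zero_le_one, by simp⟩

lemma zero_mem_coneHull (A : Set (Fin m → ℝ)) : (0 : Fin m → ℝ) ∈ coneHull A :=
  ⟨∅, fun _ => 0, by simp, by simp, by simp⟩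

lemma coneHull_mono {A B : Set (Fin m → ℝ)} (h : A ⊆ B) : coneHull A ⊆ coneHull B := by
  rintro x ⟨s, w, hs, hw, rfl⟩
  exact ⟨s, w, hs.trans h, hw, rfl⟩

lemma smul_mem_coneHull {A : Set (Fin m → ℝ)} {c : ℝ} (hc : 0 ≤ c) {x : Fin m → ℝ}
    (hx : x ∈ coneHull A) : c • x ∈ coneHull A := by
  obtain ⟨s, w, hs, hw, rfl⟩ := hx
  refine ⟨s, fun a => c * w a, hs, fun a ha => mul_nonneg hc (hw a ha), ?_⟩
  rw [Finset.smul_sum]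
  exact Finset.sum_congr rfl fun a _ => (smul_smul c (w a) a)

lemma add_mem_coneHull {A : Set (Fin m → ℝ)} {x y : Fin m → ℝ}
    (hx : x ∈ coneHull A) (hy : y ∈ coneHull A) : x + y ∈ coneHull A := by
  classical
  obtain ⟨s, w₁, hs, hw₁, rfl⟩ := hx
  obtain ⟨t, w₂, ht, hw₂, rfl⟩ := hy
  refine ⟨s ∪ t, fun a => (if a ∈ s then w₁ a else 0) + (if a ∈ t then w₂ a else 0), ?_, ?_, ?_⟩
  · rw [Finset.coe_union]
    exact Set.union_subset hs ht
  · intro a _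
    have h1 : (0:ℝ) ≤ if a ∈ s then w₁ a else 0 := by
      split
      · exact hw₁ a ‹_›
      · exact le_refl 0
    have h2 : (0:ℝ) ≤ if a ∈ t then w₂ a else 0 := by
      split
      · exact hw₂ a ‹_›
      · exact le_refl 0
    exact add_nonneg h1 h2
  · dsimp only
    have e1 : ∀ a : Fin m → ℝ,
        ((if a ∈ s then w₁ a else 0) + (if a ∈ t then w₂ a else 0)) • a
          = (if a ∈ s then w₁ a • a else 0) + (if a ∈ t then w₂ a • a else 0) := by
      intro a
      rw [add_smul]
      congr 1 <;> (split <;> simp)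
    calc (∑ a ∈ s, w₁ a • a) + ∑ a ∈ t, w₂ a • a
        = (∑ a ∈ s ∪ t, if a ∈ s then w₁ a • a else 0)
          + ∑ a ∈ s ∪ t, if a ∈ t then w₂ a • a else 0 := by
          rw [Finset.sum_ite_mem, Finset.sum_ite_mem,
            Finset.union_inter_cancel_left, Finset.union_inter_cancel_right]
      _ = ∑ a ∈ s ∪ t, ((if a ∈ s then w₁ a else 0) + (if a ∈ t then w₂ a else 0)) • a := by
          rw [← Finset.sum_add_distrib]
          exact Finset.sum_congr rfl fun a _ => (e1 a).symm

lemma sum_mem_coneHull {A : Set (Fin m → ℝ)} {ι : Type*} {s : Finset ι} {f : ι → Fin m → ℝ}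
    (h : ∀ i ∈ s, f i ∈ coneHull A) : ∑ i ∈ s, f i ∈ coneHull A :=
  Finset.sum_induction f (· ∈ coneHull A) (fun _ _ => add_mem_coneHull)
    (zero_mem_coneHull A) h

lemma neg_mem_coneHull_of_neg {A : Set (Fin m → ℝ)} {x : Fin m → ℝ}
    (hx : x ∈ coneHull {a ∈ A | -a ∈ coneHull A}) : -x ∈ coneHull A := by
  obtain ⟨s, w, hs, hw, rfl⟩ := hx
  rw [← Finset.sum_neg_distrib]
  refine sum_mem_coneHull fun a ha => ?_
  rw [← smul_neg]
  exact smul_mem_coneHull (hw a ha) (hs ha).2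

end Aux

/-- the lineality space `C ∩ (−C)` of `C = cone(A)` equals
`cone(A₀) = lin(A₀)` where `A₀ = {x ∈ A : −x ∈ coneHull A}`. -/
theorem stmt2 {m : ℕ} (A : Finset (Fin m → ℝ)) :
    coneHull (A : Set (Fin m → ℝ)) ∩ (-(coneHull (A : Set (Fin m → ℝ)))) =
      coneHull {x ∈ (A : Set (Fin m → ℝ)) | -x ∈ coneHull (A : Set (Fin m → ℝ))} ∧
    coneHull {x ∈ (A : Set (Fin m → ℝ)) | -x ∈ coneHull (A : Set (Fin m → ℝ))} =
      (Submodule.span ℝ {x ∈ (A : Set (Fin m → ℝ)) | -x ∈ coneHull (A : Set (Fin m → ℝ))} :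
        Set (Fin m → ℝ)) := by
  classical
  set C : Set (Fin m → ℝ) := coneHull (A : Set (Fin m → ℝ)) with hC
  set A₀ : Set (Fin m → ℝ) := {x ∈ (A : Set (Fin m → ℝ)) | -x ∈ C} with hA₀
  have part1 : C ∩ (-C) = coneHull A₀ := by
    apply Set.Subset.antisymm
    · rintro x ⟨hxC, hxnC⟩
      have hnx : -x ∈ C := by rwa [Set.mem_neg] at hxnC
      obtain ⟨s, w, hs, hw, rfl⟩ := hxC
      set s' := s.filter (fun a => w a ≠ 0) with hs'
      have hsum : ∑ a ∈ s', w a • a = ∑ a ∈ s, w a • a := by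
        apply Finset.sum_filter_of_ne
        intro a _ h hwa
        exact h (by rw [hwa, zero_smul])
      refine ⟨s', w, ?_, fun a ha => hw a (Finset.mem_of_mem_filter a ha), hsum.symm⟩
      intro a ha'
      have ha' : a ∈ s' := ha'
      rw [hs', Finset.mem_filter] at ha'
      obtain ⟨has, hwa⟩ := ha'
      have hwa' : 0 < w a := lt_of_le_of_ne (hw a has) (Ne.symm hwa)
      refine ⟨hs has, ?_⟩
      have key : -a = (w a)⁻¹ • (-(∑ b ∈ s, w b • b) + ∑ b ∈ s.erase a, w b • b) := by
        rw [← Finset.add_sum_erase s _ has]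
        rw [neg_add, add_assoc, neg_add_cancel, add_zero, smul_neg, smul_smul,
          inv_mul_cancel₀ hwa, one_smul]
      rw [key]
      refine smul_mem_coneHull (le_of_lt (inv_pos.mpr hwa')) ?_
      refine add_mem_coneHull hnx (sum_mem_coneHull fun b hb => ?_)
      exact smul_mem_coneHull (hw b (Finset.mem_of_mem_erase hb))
        (mem_coneHull_of_mem (hs (Finset.mem_of_mem_erase hb)))
    · intro x hx
      constructor
      · exact coneHull_mono (fun a ha => ha.1) hx
      · rw [Set.mem_neg]
        exact neg_mem_coneHull_of_neg hx
  have negclosed : ∀ x ∈ coneHull A₀, -x ∈ coneHull A₀ := by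
    intro x hx
    rw [← part1] at hx ⊢
    constructor
    · have h2 := hx.2
      rwa [Set.mem_neg] at h2
    · rw [Set.mem_neg, neg_neg]
      exact hx.1
  refine ⟨part1, Set.Subset.antisymm ?_ ?_⟩
  · rintro x ⟨s, w, hs, hw, rfl⟩
    refine Submodule.sum_mem _ fun a ha => ?_
    exact Submodule.smul_mem _ _ (Submodule.subset_span (hs ha))
  · intro x hx
    induction hx using Submodule.span_induction with
    | mem a ha => exact mem_coneHull_of_mem ha
    | zero => exact zero_mem_coneHull _
    | add y z _ _ hy hz => exact add_mem_coneHull hy hz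
    | smul c y _ hy =>
      rcases le_or_gt 0 c with hc | hc
      · exact smul_mem_coneHull hc hy
      · have : c • y = (-c) • (-y) := by rw [neg_smul, smul_neg, neg_neg]
        rw [this]
        exact smul_mem_coneHull (le_of_lt (neg_pos.mpr hc)) (negclosed y hy)
end
end

section
/- Let S ⊆ ℤ^m be a vector semigroup (nonempty and closed under addition), O = rint(cone(S)) its asymptotic cone, L = lin(S), and S* = ⋃_{n≥1} S/n. Then every x ∈ O lies in the relative interior of some L-simplex all of whose vertices belong to S*. -/
open Set Filter Topology MeasureTheory ProbabilityTheory Pointwise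

noncomputable section

/-- `S* = ⋃_{n ≥ 1} S/n`, viewed inside `ℝ^m`. -/
def Sstar {m : ℕ} (S : Set (Fin m → ℤ)) : Set (Fin m → ℝ) :=
  {x | ∃ n : ℕ, 0 < n ∧ ∃ s ∈ S, (n : ℝ) • x = zc s}

variable {m : ℕ} {S : Set (Fin m → ℤ)}

lemma zc_nsmul (p : ℕ) (s : Fin m → ℤ) : zc (p • s) = (p : ℝ) • zc s := by
  funext i; simp [zc]

lemma zc_zsmul (p : ℤ) (s : Fin m → ℤ) : zc (p • s) = (p : ℝ) • zc s := by
  funext i; simp [zc]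

lemma zc_add (s t : Fin m → ℤ) : zc (s + t) = zc s + zc t := by
  funext i; simp [zc]

lemma S_nsmul (hSadd : ∀ x ∈ S, ∀ y ∈ S, x + y ∈ S) {s : Fin m → ℤ} (hs : s ∈ S) :
    ∀ p : ℕ, 0 < p → p • s ∈ S := by
  intro p hp
  induction p with
  | zero => omega
  | succ n ih =>
    rcases Nat.eq_zero_or_pos n with h | h
    · subst h; simpa using hs
    · rw [succ_nsmul]
      exact hSadd _ (ih h) _ hs

lemma Sstar_zc {s : Fin m → ℤ} (hs : s ∈ S) : zc s ∈ Sstar S :=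
  ⟨1, one_pos, s, hs, by simp⟩

lemma Sstar_add (hSadd : ∀ x ∈ S, ∀ y ∈ S, x + y ∈ S) {a b : Fin m → ℝ}
    (ha : a ∈ Sstar S) (hb : b ∈ Sstar S) : a + b ∈ Sstar S := by
  obtain ⟨n, hn, s, hs, hna⟩ := ha
  obtain ⟨k, hk, t, ht, hkb⟩ := hb
  refine ⟨n * k, Nat.mul_pos hn hk, k • s + n • t,
    hSadd _ (S_nsmul hSadd hs k hk) _ (S_nsmul hSadd ht n hn), ?_⟩
  rw [zc_add, zc_nsmul, zc_nsmul, ← hna, ← hkb]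
  push_cast
  rw [smul_add, smul_smul, smul_smul, mul_comm (n:ℝ) (k:ℝ)]

lemma Sstar_ratsmul (hSadd : ∀ x ∈ S, ∀ y ∈ S, x + y ∈ S) {a : Fin m → ℝ} (q : ℚ)
    (hq : 0 < q) (ha : a ∈ Sstar S) : (q : ℝ) • a ∈ Sstar S := by
  obtain ⟨n, hn, s, hs, hna⟩ := ha
  have hnum : 0 < q.num := Rat.num_pos.2 hq
  refine ⟨q.den * n, Nat.mul_pos q.pos hn, q.num.toNat • s,
    S_nsmul hSadd hs _ (by omega), ?_⟩
  rw [zc_nsmul, ← hna]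
  have h1 : ((q.num.toNat : ℕ) : ℝ) = (q.num : ℝ) := by
    exact_mod_cast congrArg (Int.cast : ℤ → ℝ) (Int.toNat_of_nonneg hnum.le)
  rw [h1, smul_smul, smul_smul]
  congr 1
  have hden : (q.den : ℝ) * (q : ℝ) = (q.num : ℝ) := by
    rw [mul_comm]; exact_mod_cast Rat.mul_den_eq_num q
  push_cast
  calc (q.den : ℝ) * n * q = ((q.den:ℝ) * q) * n := by ring
  _ = (q.num : ℝ) * n := by rw [hden]

lemma Sstar_subset_span : Sstar S ⊆ (Submodule.span ℝ (zc '' S) : Set (Fin m → ℝ)) := by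
  rintro p ⟨n, hn, s, hs, hp⟩
  have h0 : (n : ℝ) ≠ 0 := by positivity
  have : p = (n : ℝ)⁻¹ • zc s := by
    rw [← hp, smul_smul, inv_mul_cancel₀ h0, one_smul]
  rw [this]
  exact Submodule.smul_mem _ _ (Submodule.subset_span ⟨s, hs, rfl⟩)

lemma coneHull_subset_span :
    coneHull (zc '' S) ⊆ (Submodule.span ℝ (zc '' S) : Set (Fin m → ℝ)) := by
  rintro x ⟨t, w, hts, _, rfl⟩
  exact Submodule.sum_mem _ fun a ha =>
    Submodule.smul_mem _ _ (Submodule.subset_span (hts ha))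

lemma Sstar_dense (hSne : S.Nonempty) (hSadd : ∀ x ∈ S, ∀ y ∈ S, x + y ∈ S)
    {u : Fin m → ℝ} (hu : u ∈ coneHull (zc '' S)) {δ : ℝ} (hδ : 0 < δ) :
    ∃ p ∈ Sstar S, dist p u < δ := by
  obtain ⟨s0, hs0⟩ := hSne
  obtain ⟨t, w, hts, hw, rfl⟩ := hu
  set M : ℝ := (∑ a ∈ t, ‖a‖) + 1 with hM
  have hM0 : 0 < M := by positivity
  set η : ℝ := δ / (2 * M) with hηdef
  have hη : 0 < η := by positivity
  have hq : ∀ a : Fin m → ℝ, ∃ q : ℚ, max (w a) 0 < (q : ℝ) ∧ (q : ℝ) < max (w a) 0 + η :=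
    fun a => exists_rat_btwn (by linarith)
  choose q hq1 hq2 using hq
  have hqpos : ∀ a, 0 < q a := fun a => by
    have := hq1 a; have : (0:ℝ) < (q a : ℝ) := lt_of_le_of_lt (le_max_right _ _) this
    exact_mod_cast this
  obtain ⟨N, hN⟩ := exists_nat_gt (‖zc s0‖ / (δ / 2))
  have hN0 : 0 < N := by
    have h0 : (0:ℝ) ≤ ‖zc s0‖ / (δ / 2) := by positivity
    exact_mod_cast h0.trans_lt hN
  have hNbound : ‖zc s0‖ / N < δ / 2 := by
    rw [div_lt_iff₀ (by positivity)]
    rw [div_lt_iff₀ (by positivity)] at hN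
    linarith [hN]
  set p : Fin m → ℝ := (∑ a ∈ t, (q a : ℝ) • a) + (((N : ℚ)⁻¹ : ℚ) : ℝ) • zc s0 with hpdef
  have hlast : (((N : ℚ)⁻¹ : ℚ) : ℝ) • zc s0 ∈ Sstar S :=
    Sstar_ratsmul hSadd _ (by positivity) (Sstar_zc hs0)
  have hpmem : p ∈ Sstar S := by
    rw [hpdef]
    have key : ∀ (t' : Finset (Fin m → ℝ)), ↑t' ⊆ zc '' S →
        ∀ x ∈ Sstar S, (∑ a ∈ t', (q a : ℝ) • a) + x ∈ Sstar S := by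
      intro t'
      induction t' using Finset.induction_on with
      | empty => intro _ x hx; simpa using hx
      | @insert a t'' hnotmem ih =>
        intro hsub x hx
        rw [Finset.sum_insert hnotmem, add_assoc]
        have ha : a ∈ zc '' S := hsub (Finset.mem_coe.2 (Finset.mem_insert_self a t''))
        have h1 : (q a : ℝ) • a ∈ Sstar S := by
          obtain ⟨sa, hsa, rfl⟩ := ha
          exact Sstar_ratsmul hSadd _ (hqpos _) (Sstar_zc hsa)
        have h2 : (∑ b ∈ t'', (q b : ℝ) • b) + x ∈ Sstar S := by
          refine ih (fun y hy => hsub ?_) x hx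
          exact Finset.mem_coe.2 (Finset.mem_insert_of_mem (Finset.mem_coe.1 hy))
        exact Sstar_add hSadd h1 h2
    exact key t hts _ hlast
  refine ⟨p, hpmem, ?_⟩
  have hdiff : p - (∑ a ∈ t, w a • a)
      = (∑ a ∈ t, ((q a : ℝ) - w a) • a) + (((N : ℚ)⁻¹ : ℚ) : ℝ) • zc s0 := by
    have h3 : ∑ a ∈ t, ((q a : ℝ) - w a) • a
        = (∑ a ∈ t, (q a : ℝ) • a) - ∑ a ∈ t, w a • a := by
      rw [← Finset.sum_sub_distrib]
      exact Finset.sum_congr rfl fun a _ => sub_smul _ _ _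
    rw [hpdef, h3]; abel
  rw [dist_eq_norm, hdiff]
  have hterm : ∀ a ∈ t, ‖((q a : ℝ) - w a) • a‖ ≤ η * ‖a‖ := by
    intro a ha
    rw [norm_smul]
    apply mul_le_mul_of_nonneg_right _ (norm_nonneg a)
    rw [Real.norm_eq_abs, abs_le]
    have hmax : max (w a) 0 = w a := max_eq_left (hw a ha)
    constructor
    · have := hq1 a; rw [hmax] at this; linarith
    · have := hq2 a; rw [hmax] at this; linarith
  have h4 : ‖∑ a ∈ t, ((q a : ℝ) - w a) • a‖ ≤ η * ∑ a ∈ t, ‖a‖ := by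
    calc ‖∑ a ∈ t, ((q a : ℝ) - w a) • a‖ ≤ ∑ a ∈ t, ‖((q a : ℝ) - w a) • a‖ :=
          norm_sum_le _ _
    _ ≤ ∑ a ∈ t, η * ‖a‖ := Finset.sum_le_sum hterm
    _ = η * ∑ a ∈ t, ‖a‖ := by rw [Finset.mul_sum]
  have h5 : ‖(((N : ℚ)⁻¹ : ℚ) : ℝ) • zc s0‖ = ‖zc s0‖ / N := by
    rw [norm_smul, Real.norm_eq_abs]
    have : (((N : ℚ)⁻¹ : ℚ) : ℝ) = (N : ℝ)⁻¹ := by push_cast; ring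
    rw [this, abs_of_nonneg (by positivity), div_eq_inv_mul]
  have hsum_le : η * ∑ a ∈ t, ‖a‖ < δ / 2 := by
    have h6 : η * ∑ a ∈ t, ‖a‖ < η * M := by
      apply mul_lt_mul_of_pos_left _ hη
      rw [hM]; linarith
    have h7 : η * M = δ / 2 := by
      rw [hηdef]; field_simp
    linarith
  calc ‖(∑ a ∈ t, ((q a : ℝ) - w a) • a) + (((N : ℚ)⁻¹ : ℚ) : ℝ) • zc s0‖
      ≤ ‖∑ a ∈ t, ((q a : ℝ) - w a) • a‖ + ‖(((N : ℚ)⁻¹ : ℚ) : ℝ) • zc s0‖ := norm_add_le _ _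
  _ < δ / 2 + δ / 2 := by rw [h5]; exact add_lt_add (h4.trans_lt hsum_le) hNbound
  _ = δ := by ring

def finSuccNe (d : ℕ) : Fin d ≃ {i : Fin (d + 1) // i ≠ 0} where
  toFun := fun j => ⟨j.succ, Fin.succ_ne_zero j⟩
  invFun := fun i => Fin.pred i.1 i.2
  left_inv := fun j => by simp
  right_inv := fun i => by ext; simp

@[simp] lemma finSuccNe_apply (d : ℕ) (j : Fin d) :
    ((finSuccNe d j : {i : Fin (d + 1) // i ≠ 0}) : Fin (d + 1)) = j.succ := rfl

/-- helper: a set s ⊆ LL containing a point, whose vectorSpan contains LL, has affine span LL. -/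
lemma affineSpan_set_eq {s : Set (Fin m → ℝ)} {LL : Submodule ℝ (Fin m → ℝ)}
    (hsub : s ⊆ (LL : Set (Fin m → ℝ))) {c : Fin m → ℝ} (hc : c ∈ s)
    (hdir : LL ≤ vectorSpan ℝ s) :
    (affineSpan ℝ s : Set (Fin m → ℝ)) = (LL : Set (Fin m → ℝ)) := by
  apply subset_antisymm
  · intro z hz
    have h1 : affineSpan ℝ s ≤ LL.toAffineSubspace := by
      refine le_trans affineSpan_le_toAffineSubspace_span ?_
      have : Submodule.span ℝ s ≤ LL := Submodule.span_le.2 hsub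
      intro y hy
      exact Submodule.mem_toAffineSubspace.2 (this (Submodule.mem_toAffineSubspace.1 hy))
    exact Submodule.mem_toAffineSubspace.1 (h1 hz)
  · intro z hz
    have h1 : z - c ∈ (affineSpan ℝ s).direction := by
      rw [direction_affineSpan]
      exact hdir (LL.sub_mem hz (hsub hc))
    have := AffineSubspace.vadd_mem_of_mem_direction h1 (mem_affineSpan ℝ hc)
    simpa using this

lemma zero_mem_coneHull_s7 : (0 : Fin m → ℝ) ∈ coneHull (zc '' S) :=
  ⟨∅, fun _ => 0, by simp, by simp, by simp⟩

lemma subset_coneHull : zc '' S ⊆ coneHull (zc '' S) := by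
  intro a ha
  exact ⟨{a}, fun _ => 1, by simpa using ha, by simp, by simp⟩

lemma affineSpan_coneHull_eq :
    (affineSpan ℝ (coneHull (zc '' S)) : Set (Fin m → ℝ)) =
      (Submodule.span ℝ (zc '' S) : Set (Fin m → ℝ)) := by
  refine affineSpan_set_eq coneHull_subset_span zero_mem_coneHull_s7 ?_
  refine Submodule.span_le.2 ?_
  intro a ha
  have := vsub_mem_vectorSpan ℝ (subset_coneHull ha) zero_mem_coneHull_s7
  simpa [vsub_eq_sub] using this

lemma intrinsic_unpack {s : Set (Fin m → ℝ)} {x : Fin m → ℝ}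
    (h : x ∈ intrinsicInterior ℝ s) :
    x ∈ s ∧ ∃ W : Set (Fin m → ℝ), IsOpen W ∧ x ∈ W ∧
      W ∩ (affineSpan ℝ s : Set (Fin m → ℝ)) ⊆ s := by
  refine ⟨intrinsicInterior_subset h, ?_⟩
  obtain ⟨y, hy, rfl⟩ := h
  rw [mem_interior_iff_mem_nhds, nhds_subtype, Filter.mem_comap] at hy
  obtain ⟨T, hT, hTsub⟩ := hy
  obtain ⟨W, hWT, hWo, hxW⟩ := mem_nhds_iff.1 hT
  refine ⟨W, hWo, hxW, ?_⟩
  rintro z ⟨hzW, hzA⟩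
  exact hTsub (show (⟨z, hzA⟩ : affineSpan ℝ s) ∈ (Subtype.val) ⁻¹' T from hWT hzW)

lemma intrinsic_pack {s : Set (Fin m → ℝ)} {x : Fin m → ℝ} {W : Set (Fin m → ℝ)}
    (hxs : x ∈ s) (hWo : IsOpen W) (hxW : x ∈ W)
    (hWs : W ∩ (affineSpan ℝ s : Set (Fin m → ℝ)) ⊆ s) :
    x ∈ intrinsicInterior ℝ s := by
  refine ⟨⟨x, subset_affineSpan ℝ s hxs⟩, ?_, rfl⟩
  rw [mem_interior_iff_mem_nhds, nhds_subtype, Filter.mem_comap]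
  exact ⟨W, hWo.mem_nhds hxW, fun y hy => hWs ⟨hy, y.2⟩⟩

theorem stmt7' (hSne : S.Nonempty)
    (hSadd : ∀ x ∈ S, ∀ y ∈ S, x + y ∈ S) :
    ∀ x ∈ intrinsicInterior ℝ (coneHull (zc '' S)),
      ∃ (k : ℕ) (v : Fin (k + 1) → (Fin m → ℝ)),
        (∀ i, v i ∈ Sstar S) ∧ AffineIndependent ℝ v ∧
        (affineSpan ℝ (Set.range v) : Set (Fin m → ℝ)) =
          (Submodule.span ℝ (zc '' S) : Set (Fin m → ℝ)) ∧
        x ∈ intrinsicInterior ℝ (convexHull ℝ (Set.range v)) := by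
  intro x hx
  classical
  set LL := Submodule.span ℝ (zc '' S) with hLLdef
  obtain ⟨hxc, W0, hW0o, hxW0, hW0sub⟩ := intrinsic_unpack hx
  rw [affineSpan_coneHull_eq] at hW0sub
  have hxL : x ∈ LL := coneHull_subset_span hxc
  -- basis from the generators
  obtain ⟨bs, hbsub, hbspan, hbli⟩ := exists_linearIndependent ℝ (zc '' S)
  have hbfin : bs.Finite := hbli.setFinite
  haveI := hbfin.fintype
  set d := Fintype.card bs with hd
  have e : Fin d ≃ bs := (Fintype.equivFin bs).symm
  set bv : Fin d → (Fin m → ℝ) := fun j => (e j : Fin m → ℝ) with hbv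
  have hrange : Set.range bv = bs := by
    ext y; constructor
    · rintro ⟨j, rfl⟩; exact (e j).2
    · intro hy; exact ⟨e.symm ⟨y, hy⟩, by simp [hbv]⟩
  have hli : LinearIndependent ℝ bv := by
    have : bv = (Subtype.val : bs → (Fin m → ℝ)) ∘ e := rfl
    rw [this]
    exact hbli.comp e e.injective
  have hspan : Submodule.span ℝ (Set.range bv) = LL := by rw [hrange, hbspan]
  have hbvS : ∀ j, bv j ∈ zc '' S := fun j => hbsub (hrange ▸ Set.mem_range_self j)
  have hbvL : ∀ j, bv j ∈ LL := fun j => Submodule.subset_span (hbvS j)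
  -- dual functionals
  set B : Module.Basis (Fin d) ℝ (Submodule.span ℝ (Set.range bv)) := Module.Basis.span hli with hB
  choose φ hφ using fun j => LinearMap.exists_extend (B.coord j)
  have hφ' : ∀ j (z : Fin m → ℝ) (hz : z ∈ Submodule.span ℝ (Set.range bv)),
      φ j z = B.coord j ⟨z, hz⟩ := by
    intro j z hz
    have := LinearMap.congr_fun (hφ j) ⟨z, hz⟩
    simpa using this
  have hrepr : ∀ z ∈ LL, ∑ j, φ j z • bv j = z := by
    intro z hz
    rw [← hspan] at hz
    have h1 := B.sum_repr ⟨z, hz⟩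
    have h3 : ∀ j, φ j z = B.repr ⟨z, hz⟩ j := fun j => by
      rw [hφ' j z hz, B.coord_apply]
    calc ∑ j, φ j z • bv j
        = ∑ j, B.repr ⟨z, hz⟩ j • ((B j : Fin m → ℝ)) := by
          refine Finset.sum_congr rfl fun j _ => ?_
          rw [h3 j, hB, Module.Basis.span_apply]
      _ = ((∑ j, B.repr ⟨z, hz⟩ j • B j : Submodule.span ℝ (Set.range bv)) :
            Fin m → ℝ) := by
          simp only [Submodule.coe_sum, Submodule.coe_smul]
      _ = z := by rw [h1]
  have hφbv : ∀ j i, φ j (bv i) = if i = j then 1 else 0 := by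
    intro j i
    have hmem : bv i ∈ Submodule.span ℝ (Set.range bv) :=
      Submodule.subset_span (Set.mem_range_self i)
    rw [hφ' j (bv i) hmem]
    have : (⟨bv i, hmem⟩ : Submodule.span ℝ (Set.range bv)) = B i := by
      apply Subtype.ext; rw [hB, Module.Basis.span_apply]
    rw [this, B.coord_apply, B.repr_self]
    simp [Finsupp.single_apply]
  have hφcont : ∀ j, Continuous (φ j) := fun j =>
    (φ j).continuous_of_finiteDimensional
  -- find u = x - τ • (∑ bv) in W0 ∩ LL ⊆ coneHull
  set bsum : Fin m → ℝ := ∑ j, bv j with hbsum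
  have hf : Continuous fun t : ℝ => x - t • bsum :=
    continuous_const.sub (continuous_id.smul continuous_const)
  have h0W : (fun t : ℝ => x - t • bsum) 0 ∈ W0 := by simpa using hxW0
  obtain ⟨r, hr, hball⟩ := Metric.isOpen_iff.1 (hW0o.preimage hf) 0 h0W
  set τ : ℝ := r / 2 with hτ
  have hτpos : 0 < τ := by positivity
  have hτW : x - τ • bsum ∈ W0 := by
    apply hball
    simp only [Metric.mem_ball, Real.dist_eq, sub_zero]
    rw [abs_of_pos hτpos]; rw [hτ]; linarith
  set u : Fin m → ℝ := x - τ • bsum with hu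
  have huL : u ∈ LL := LL.sub_mem hxL (LL.smul_mem _ (Submodule.sum_mem _ fun j _ => hbvL j))
  have huC : u ∈ coneHull (zc '' S) := hW0sub ⟨hτW, huL⟩
  -- continuity: find δ ball around u mapping into positive orthant under g
  set g : (Fin m → ℝ) → (Fin d → ℝ) := fun y j => φ j (x - y) with hg
  have hgcont : Continuous g := by
    apply continuous_pi
    intro j
    exact (hφcont j).comp (continuous_const.sub continuous_id)
  have hgu : ∀ j, g u j = τ := by
    intro j
    rw [hg]
    simp only [hu, sub_sub_cancel]
    rw [_root_.map_smul, hbsum, _root_.map_sum]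
    rw [Finset.sum_congr rfl fun i _ => hφbv j i]
    simp
  set O : Set (Fin d → ℝ) := {μ | ∀ j, 0 < μ j} with hO
  have hOopen : IsOpen O := by
    have : O = ⋂ j, {μ : Fin d → ℝ | 0 < μ j} := by ext μ; simp [hO]
    rw [this]
    exact isOpen_iInter_of_finite fun j =>
      isOpen_lt continuous_const (continuous_apply j)
  have huO : g u ∈ O := fun j => by rw [hgu j]; exact hτpos
  obtain ⟨δ, hδ, hδball⟩ := Metric.isOpen_iff.1 (hOopen.preimage hgcont) u huO
  obtain ⟨p, hpS, hpu⟩ := Sstar_dense hSne hSadd huC hδ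
  have hpO : g p ∈ O := hδball (by rwa [Metric.mem_ball])
  have hpL : p ∈ LL := Sstar_subset_span hpS
  set μ : Fin d → ℝ := fun j => φ j (x - p) with hμ
  have hμpos : ∀ j, 0 < μ j := hpO
  have hxrep : x = p + ∑ j, μ j • bv j := by
    have := hrepr (x - p) (LL.sub_mem hxL hpL)
    rw [hμ]; rw [this]; abel
  -- K
  obtain ⟨K, hK⟩ := exists_nat_gt (max (∑ j, μ j) 0)
  have hK0 : 0 < K := by
    have : (0:ℝ) < K := lt_of_le_of_lt (le_max_right _ _) hK
    exact_mod_cast this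
  have hKsum : ∑ j, μ j < K := lt_of_le_of_lt (le_max_left _ _) hK
  -- vertices
  set v : Fin (d + 1) → (Fin m → ℝ) := Fin.cons p (fun j => p + (K : ℝ) • bv j) with hv
  have hvS : ∀ i, v i ∈ Sstar S := by
    intro i
    refine Fin.cases ?_ ?_ i
    · simpa [hv] using hpS
    · intro j
      have hKbv : (K : ℝ) • bv j ∈ Sstar S := by
        obtain ⟨t, ht, hteq⟩ := hbvS j
        rw [← hteq, ← zc_nsmul]
        exact Sstar_zc (S_nsmul hSadd ht K hK0)
      simpa [hv] using Sstar_add hSadd hpS hKbv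
  have hvL : ∀ i, v i ∈ LL := by
    intro i
    refine Fin.cases ?_ ?_ i
    · simpa [hv] using hpL
    · intro j
      simp only [hv, Fin.cons_succ]
      exact LL.add_mem hpL (LL.smul_mem _ (hbvL j))
  have hvsub : ∀ j : Fin d, v j.succ - v 0 = (K : ℝ) • bv j := by
    intro j; simp [hv]
  -- affine independence
  have haff : AffineIndependent ℝ v := by
    rw [affineIndependent_iff_linearIndependent_vsub ℝ v 0]
    rw [← linearIndependent_equiv (finSuccNe d)]
    show LinearIndependent ℝ ((fun i : {i : Fin (d+1) // i ≠ 0} => v i -ᵥ v 0) ∘ (finSuccNe d))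
    have : ((fun i : {i : Fin (d+1) // i ≠ 0} => v i -ᵥ v 0) ∘ (finSuccNe d))
        = fun j => (K : ℝ) • bv j := by
      funext j
      show v ((finSuccNe d j : {i : Fin (d+1) // i ≠ 0}) : Fin (d+1)) -ᵥ v 0 = _
      rw [finSuccNe_apply, vsub_eq_sub, hvsub]
    rw [this]
    have hK' : (K : ℝ) ≠ 0 := Nat.cast_ne_zero.2 hK0.ne'
    have := hli.map' ((K : ℝ) • LinearMap.id) (by
      rw [LinearMap.ker_smul _ _ hK']; exact LinearMap.ker_id)
    have h2 : (⇑((K : ℝ) • (LinearMap.id : (Fin m → ℝ) →ₗ[ℝ] (Fin m → ℝ))) ∘ bv) = fun j => (K : ℝ) • bv j := by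
      funext j; simp
    rw [h2] at this; exact this
  -- affine span
  have hvspan : (affineSpan ℝ (Set.range v) : Set (Fin m → ℝ)) = (LL : Set (Fin m → ℝ)) := by
    refine affineSpan_set_eq (fun y ⟨i, hi⟩ => hi ▸ hvL i) (Set.mem_range_self 0) ?_
    rw [← hspan]
    refine Submodule.span_le.2 ?_
    rintro y ⟨j, rfl⟩
    have h1 : v j.succ -ᵥ v 0 ∈ vectorSpan ℝ (Set.range v) :=
      vsub_mem_vectorSpan ℝ (Set.mem_range_self _) (Set.mem_range_self _)
    rw [vsub_eq_sub, hvsub] at h1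
    have h2 := (vectorSpan ℝ (Set.range v)).smul_mem ((K : ℝ)⁻¹) h1
    rwa [smul_smul, inv_mul_cancel₀ (Nat.cast_ne_zero.2 hK0.ne' : (K:ℝ) ≠ 0), one_smul] at h2
  -- final membership
  set W : Set (Fin m → ℝ) :=
    (⋂ j, {y | 0 < φ j (y - p)}) ∩ {y | ∑ j, φ j (y - p) < K} with hW
  have hWo : IsOpen W := by
    refine IsOpen.inter ?_ ?_
    · exact isOpen_iInter_of_finite fun j =>
        isOpen_lt continuous_const ((hφcont j).comp (continuous_id.sub continuous_const))
    · refine isOpen_lt ?_ continuous_const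
      exact continuous_finset_sum _ fun j _ =>
        (hφcont j).comp (continuous_id.sub continuous_const)
  have hxWmem : x ∈ W := by
    constructor
    · exact Set.mem_iInter.2 fun j => hμpos j
    · show ∑ j, φ j (x - p) < (K : ℝ)
      exact hKsum
  have hWsub : W ∩ (LL : Set (Fin m → ℝ)) ⊆ convexHull ℝ (Set.range v) := by
    rintro y ⟨⟨hy1, hy2⟩, hyL⟩
    have hy1' : ∀ j, 0 < φ j (y - p) := fun j => Set.mem_iInter.1 hy1 j
    have hy2' : ∑ j, φ j (y - p) < (K : ℝ) := hy2
    set a : Fin d → ℝ := fun j => φ j (y - p) with ha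
    have hyrep : y = p + ∑ j, a j • bv j := by
      have := hrepr (y - p) (LL.sub_mem hyL hpL)
      rw [ha, this]; abel
    set θ : Fin (d + 1) → ℝ := Fin.cons (1 - (∑ j, a j) / K) (fun j => a j / K) with hθ
    have hθ0 : ∀ i, 0 ≤ θ i := by
      intro i
      refine Fin.cases ?_ ?_ i
      · simp only [hθ, Fin.cons_zero]
        have : (∑ j, a j) / K ≤ 1 := by
          rw [div_le_one (by exact_mod_cast hK0)]
          exact hy2'.le
        linarith
      · intro j
        simp only [hθ, Fin.cons_succ]
        exact div_nonneg (hy1' j).le (Nat.cast_nonneg K)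
    have hθsum : ∑ i, θ i = 1 := by
      rw [Fin.sum_univ_succ]
      simp only [hθ, Fin.cons_zero, Fin.cons_succ]
      rw [← Finset.sum_div]
      ring
    have hKne : (K : ℝ) ≠ 0 := Nat.cast_ne_zero.2 hK0.ne'
    have hcomb : ∑ i, θ i • v i = y := by
      rw [Fin.sum_univ_succ]
      simp only [hθ, hv, Fin.cons_zero, Fin.cons_succ]
      rw [hyrep]
      rw [Finset.sum_congr rfl fun j (_ : j ∈ Finset.univ) =>
        (smul_add (a j / K) p ((K:ℝ) • bv j))]
      rw [Finset.sum_add_distrib, ← Finset.sum_smul,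
        Finset.sum_congr rfl fun j (_ : j ∈ Finset.univ) =>
          (smul_smul (a j / (K:ℝ)) ((K:ℝ)) (bv j)),
        ← Finset.sum_div]
      simp only [div_mul_cancel₀ _ hKne]
      rw [sub_smul, one_smul]
      abel
    have := Finset.centerMass_mem_convexHull (Finset.univ : Finset (Fin (d+1)))
      (fun i _ => hθ0 i) (by rw [hθsum]; norm_num)
      (fun i _ => Set.mem_range_self (f := v) i)
    rwa [Finset.centerMass_eq_of_sum_1 _ _ hθsum, hcomb] at this
  have hxconv : x ∈ convexHull ℝ (Set.range v) := hWsub ⟨hxWmem, hxL⟩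
  refine ⟨d, v, hvS, haff, hvspan, ?_⟩
  refine intrinsic_pack hxconv hWo hxWmem ?_
  rw [affineSpan_convexHull, hvspan]
  exact hWsub

/-- every point of the asymptotic cone `O = rint(cone(S))` lies in the
relative interior of an `L`-simplex with vertices in `S*`, `L = lin(S)`. -/
theorem stmt7 {m : ℕ} (S : Set (Fin m → ℤ)) (hSne : S.Nonempty)
    (hSadd : ∀ x ∈ S, ∀ y ∈ S, x + y ∈ S) :
    ∀ x ∈ intrinsicInterior ℝ (coneHull (zc '' S)),
      ∃ (k : ℕ) (v : Fin (k + 1) → (Fin m → ℝ)),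
        (∀ i, v i ∈ Sstar S) ∧ AffineIndependent ℝ v ∧
        (affineSpan ℝ (Set.range v) : Set (Fin m → ℝ)) =
          (Submodule.span ℝ (zc '' S) : Set (Fin m → ℝ)) ∧
        x ∈ intrinsicInterior ℝ (convexHull ℝ (Set.range v)) :=
  stmt7' hSne hSadd
end
end

section
/- Let S ⊆ ℤ^m be a vector semigroup and O = rint(cone(S)). Then every rational point of O belongs to S* = ⋃_{n≥1} S/n; that is, O ∩ ℚ^m ⊆ S*. -/
open Set Filter Topology MeasureTheory ProbabilityTheory Pointwise

noncomputable section

def qc {m : ℕ} (x : Fin m → ℤ) : Fin m → ℚ := fun i => (x i : ℚ)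

lemma qc_inj {m : ℕ} : Function.Injective (qc (m := m)) := by
  intro a b h
  funext i
  have h2 : ((a i : ℚ)) = ((b i : ℚ)) := congrFun h i
  exact_mod_cast h2

/-- A rational vector in the real span of integral vectors has rational coefficients. -/
lemma span_rat {m : ℕ} (G : Finset (Fin m → ℤ)) (x : Fin m → ℚ) (w : (Fin m → ℤ) → ℝ)
    (hx : ∀ i, (x i : ℝ) = ∑ a ∈ G, w a * (a i : ℝ)) :
    ∃ c : (Fin m → ℤ) → ℚ, ∀ i, x i = ∑ a ∈ G, c a * (a i : ℚ) := by
  have hmem : x ∈ Submodule.span ℚ (↑(G.image qc) : Set (Fin m → ℚ)) := by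
    by_contra hnot
    obtain ⟨φ, hφx, hφmap⟩ := Submodule.exists_dual_map_eq_bot_of_notMem hnot inferInstance
    have hker : ∀ a ∈ G, φ (qc a) = 0 := by
      intro a ha
      have hmem' : φ (qc a) ∈ Submodule.map φ (Submodule.span ℚ (↑(G.image qc) : Set (Fin m → ℚ))) :=
        Submodule.mem_map_of_mem (Submodule.subset_span (by
          simp only [Finset.coe_image, Set.mem_image, Finset.mem_coe]
          exact ⟨a, ha, rfl⟩))
      rw [hφmap] at hmem'
      simpa using hmem'
    have hφeq : ∀ v : Fin m → ℚ, φ v = ∑ i, v i * φ (Pi.single i 1) := by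
      intro v
      have hv : v = ∑ i, v i • (Pi.single i 1 : Fin m → ℚ) := by
        funext j
        simp [Pi.single_apply, Finset.sum_apply, mul_comm]
      conv_lhs => rw [hv]
      rw [map_sum]
      simp [smul_eq_mul]
    -- real computation
    have h1 : ((φ x : ℚ) : ℝ) = ∑ i, (x i : ℝ) * ((φ (Pi.single i 1) : ℚ) : ℝ) := by
      rw [hφeq x]; push_cast; ring_nf
    have h2 : ∑ i, (x i : ℝ) * ((φ (Pi.single i 1) : ℚ) : ℝ) = 0 := by
      calc ∑ i, (x i : ℝ) * ((φ (Pi.single i 1) : ℚ) : ℝ)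
          = ∑ i, (∑ a ∈ G, w a * (a i : ℝ)) * ((φ (Pi.single i 1) : ℚ) : ℝ) := by
            simp_rw [← hx]
        _ = ∑ a ∈ G, w a * ∑ i, (a i : ℝ) * ((φ (Pi.single i 1) : ℚ) : ℝ) := by
            simp_rw [Finset.sum_mul]
            rw [Finset.sum_comm]
            congr 1; funext a
            rw [Finset.mul_sum]
            congr 1; funext i; ring
        _ = 0 := by
            apply Finset.sum_eq_zero
            intro a ha
            have : ∑ i, ((a i : ℚ) : ℝ) * ((φ (Pi.single i 1) : ℚ) : ℝ) = ((φ (qc a) : ℚ) : ℝ) := by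
              rw [hφeq (qc a)]; push_cast [qc]; ring_nf
            rw [show ∑ i, ((a i:ℝ)) * ((φ (Pi.single i 1) : ℚ) : ℝ)
                  = ∑ i, ((a i : ℚ):ℝ) * ((φ (Pi.single i 1) : ℚ) : ℝ) by push_cast; rfl,
              this, hker a ha]
            simp
    have : φ x = 0 := by exact_mod_cast h1.trans h2
    exact hφx this
  obtain ⟨f, -, hf⟩ := Submodule.mem_span_finset.mp hmem
  refine ⟨fun a => f (qc a), fun i => ?_⟩
  have hsum : ∑ a ∈ G, f (qc a) • qc a = x := by
    rw [← hf, Finset.sum_image (fun a _ b _ h => qc_inj h)]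
  have := congrFun hsum i
  simpa [qc, Finset.sum_apply, smul_eq_mul] using this.symm

/-- A rational point with a nonnegative real representation over integer vectors
has a nonnegative rational representation. -/
lemma ratSol {m : ℕ} : ∀ (n : ℕ) (G : Finset (Fin m → ℤ)), G.card = n →
    ∀ (x : Fin m → ℚ) (w : (Fin m → ℤ) → ℝ), (∀ a ∈ G, 0 ≤ w a) →
    (∀ i, (x i : ℝ) = ∑ a ∈ G, w a * (a i : ℝ)) →
    ∃ c : (Fin m → ℤ) → ℚ, (∀ a ∈ G, 0 ≤ c a) ∧ ∀ i, x i = ∑ a ∈ G, c a * (a i : ℚ) := by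
  intro n
  induction n with
  | zero =>
    intro G hG x w _ hx
    have hGe : G = ∅ := Finset.card_eq_zero.mp hG
    subst hGe
    refine ⟨fun _ => 0, by simp, fun i => ?_⟩
    have := hx i
    simp only [Finset.sum_empty] at this ⊢
    exact_mod_cast this
  | succ n ih =>
    intro G hG x w hw hx
    obtain ⟨c0, hc0⟩ := span_rat G x w hx
    by_cases hpos : ∀ a ∈ G, 0 ≤ c0 a
    · exact ⟨c0, hpos, hc0⟩
    push_neg at hpos
    obtain ⟨b, hbG, hb⟩ := hpos
    set d : (Fin m → ℤ) → ℝ := fun a => w a - (c0 a : ℝ) with hd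
    have hdb : 0 < d b := by
      have h1 : (c0 b : ℝ) < 0 := by exact_mod_cast hb
      have h2 : 0 ≤ w b := hw b hbG
      simp only [hd]; linarith
    have hd0 : ∀ i, ∑ a ∈ G, d a * (a i : ℝ) = 0 := by
      intro i
      have h1 := hx i
      have h2 : (x i : ℝ) = ∑ a ∈ G, (c0 a : ℝ) * ((a i : ℤ) : ℝ) := by
        have := hc0 i
        push_cast [this]
        rfl
      simp only [hd, sub_mul, Finset.sum_sub_distrib, ← h1, ← h2, sub_self]
    set T := G.filter (fun a => 0 < d a) with hT
    have hbT : b ∈ T := by simp [hT, hbG, hdb]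
    obtain ⟨a0, ha0T, ha0min⟩ := T.exists_min_image (fun a => w a / d a) ⟨b, hbT⟩
    have ha0G : a0 ∈ G := (Finset.mem_filter.mp ha0T).1
    have hda0 : 0 < d a0 := (Finset.mem_filter.mp ha0T).2
    set θ := w a0 / d a0 with hθ
    have hθ0 : 0 ≤ θ := div_nonneg (hw a0 ha0G) hda0.le
    set w' : (Fin m → ℤ) → ℝ := fun a => w a - θ * d a with hw'def
    have hw' : ∀ a ∈ G, 0 ≤ w' a := by
      intro a ha
      rcases le_or_gt (d a) 0 with h | h
      · have : θ * d a ≤ 0 := mul_nonpos_of_nonneg_of_nonpos hθ0 h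
        have := hw a ha
        simp only [hw'def]; linarith
      · have haT : a ∈ T := by simp [hT, ha, h]
        have hle : θ ≤ w a / d a := ha0min a haT
        have h2 : θ * d a ≤ w a / d a * d a := mul_le_mul_of_nonneg_right hle h.le
        rw [div_mul_cancel₀ _ (ne_of_gt h)] at h2
        simp only [hw'def]; linarith
    have hw'a0 : w' a0 = 0 := by
      simp only [hw'def, hθ]
      field_simp
      ring
    have hsum : ∀ i, (x i : ℝ) = ∑ a ∈ G.erase a0, w' a * (a i : ℝ) := by
      intro i
      have h1 : ∑ a ∈ G, w' a * (a i : ℝ)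
          = ∑ a ∈ G, w a * (a i : ℝ) - θ * ∑ a ∈ G, d a * (a i : ℝ) := by
        rw [Finset.mul_sum, ← Finset.sum_sub_distrib]
        congr 1; funext a; simp only [hw'def]; ring
      have h2 : ∑ a ∈ G, w' a * (a i : ℝ) = (x i : ℝ) := by
        rw [h1, hd0 i, hx i]; ring
      rw [← h2, ← Finset.add_sum_erase G _ ha0G, hw'a0, zero_mul, zero_add]
    have hcard : (G.erase a0).card = n := by
      rw [Finset.card_erase_of_mem ha0G, hG]; rfl
    obtain ⟨c, hcpos, hceq⟩ := ih (G.erase a0) hcard x w'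
      (fun a ha => hw' a (Finset.mem_of_mem_erase ha)) hsum
    refine ⟨Function.update c a0 0, ?_, ?_⟩
    · intro a ha
      rcases eq_or_ne a a0 with rfl | hne
      · simp
      · rw [Function.update_of_ne hne]
        exact hcpos a (Finset.mem_erase.mpr ⟨hne, ha⟩)
    · intro i
      rw [← Finset.add_sum_erase G _ ha0G, Function.update_self, zero_mul, zero_add]
      rw [hceq i]
      apply Finset.sum_congr rfl
      intro a ha
      rw [Function.update_of_ne (Finset.mem_erase.mp ha).1]

/-- Stretching from an intrinsic-interior point past itself, with rational parameter. -/
lemma stretch {m : ℕ} {C : Set (Fin m → ℝ)} {x b : Fin m → ℝ}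
    (hx : x ∈ intrinsicInterior ℝ C) (hb : b ∈ C) :
    ∃ t : ℚ, 0 < t ∧ x + (t : ℝ) • (x - b) ∈ C := by
  obtain ⟨y, hy, rfl⟩ := hx
  have hbA : b ∈ affineSpan ℝ C := subset_affineSpan ℝ C hb
  have hmem : ∀ t : ℝ, (↑y : Fin m → ℝ) + t • ((↑y : Fin m → ℝ) - b) ∈ affineSpan ℝ C := by
    intro t
    have h := AffineSubspace.smul_vsub_vadd_mem (affineSpan ℝ C) t y.2 hbA y.2
    simpa [vsub_eq_sub, vadd_eq_add, add_comm] using h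
  set f : ℝ → affineSpan ℝ C := fun t => ⟨(↑y : Fin m → ℝ) + t • ((↑y : Fin m → ℝ) - b), hmem t⟩
    with hf_def
  have hf : Continuous f := by
    apply Continuous.subtype_mk
    fun_prop
  have h0 : f 0 = y := by
    apply Subtype.ext
    simp [hf_def]
  have hopen : IsOpen (f ⁻¹' interior (((↑) : affineSpan ℝ C → (Fin m → ℝ)) ⁻¹' C)) :=
    isOpen_interior.preimage hf
  have h0mem : (0:ℝ) ∈ f ⁻¹' interior (((↑) : affineSpan ℝ C → (Fin m → ℝ)) ⁻¹' C) := by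
    simp only [Set.mem_preimage, h0]
    exact hy
  obtain ⟨ε, hε, hball⟩ := Metric.isOpen_iff.mp hopen 0 h0mem
  obtain ⟨t, ht1, ht2⟩ := exists_rat_btwn hε
  have htb : (t:ℝ) ∈ Metric.ball (0:ℝ) ε := by
    simp only [Metric.mem_ball, Real.dist_eq, sub_zero]
    rw [abs_of_pos ht1]
    exact ht2
  have := interior_subset (hball htb)
  exact ⟨t, by exact_mod_cast ht1, this⟩

def zinv {m : ℕ} (v : Fin m → ℝ) : Fin m → ℤ := fun i => ⌊v i⌋

lemma zinv_zc {m : ℕ} (a : Fin m → ℤ) : zinv (zc a) = a := by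
  funext i; simp [zinv, zc]

/-- Extract an integer-indexed representation from cone hull membership. -/
lemma coneHull_rep {m : ℕ} {S : Set (Fin m → ℤ)} {x : Fin m → ℝ}
    (hx : x ∈ coneHull (zc '' S)) :
    ∃ G : Finset (Fin m → ℤ), ↑G ⊆ S ∧ ∃ w : (Fin m → ℤ) → ℝ, (∀ a ∈ G, 0 ≤ w a) ∧
      ∀ i, x i = ∑ a ∈ G, w a * (a i : ℝ) := by
  obtain ⟨s, w, hsub, hw, hxeq⟩ := hx
  have hzs : ∀ v ∈ s, zc (zinv v) = v := by
    intro v hv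
    obtain ⟨a, _, rfl⟩ := hsub hv
    rw [zinv_zc]
  refine ⟨s.image zinv, ?_, fun a => w (zc a), ?_, ?_⟩
  · intro a ha
    simp only [Finset.coe_image, Set.mem_image, Finset.mem_coe] at ha
    obtain ⟨v, hv, rfl⟩ := ha
    obtain ⟨a', ha', rfl⟩ := hsub hv
    rw [zinv_zc]
    exact ha'
  · intro a ha
    simp only [Finset.mem_image] at ha
    obtain ⟨v, hv, rfl⟩ := ha
    show 0 ≤ w (zc (zinv v))
    rw [hzs v hv]
    exact hw v hv
  · intro i
    rw [Finset.sum_image (fun u hu v hv huv => by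
      have := congrArg zc huv
      rwa [hzs u hu, hzs v hv] at this)]
    have := congrFun hxeq i
    rw [this, Finset.sum_apply]
    apply Finset.sum_congr rfl
    intro v hv
    show (w v • v) i = w (zc (zinv v)) * ((zinv v i : ℤ) : ℝ)
    rw [hzs v hv]
    have : ((zinv v i : ℤ) : ℝ) = v i := by
      have := congrFun (hzs v hv) i
      simpa [zc, zinv] using this
    rw [this]
    simp [smul_eq_mul]

lemma smul_memS {m : ℕ} {S : Set (Fin m → ℤ)}
    (hSadd : ∀ x ∈ S, ∀ y ∈ S, x + y ∈ S) {s : Fin m → ℤ} (hs : s ∈ S) :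
    ∀ k : ℕ, 0 < k → k • s ∈ S := by
  intro k
  induction k with
  | zero => intro h; exact absurd h (lt_irrefl 0)
  | succ k ih =>
    intro _
    rcases Nat.eq_zero_or_pos k with rfl | hk
    · simpa using hs
    · have h : (k+1) • s = s + k • s := by rw [add_nsmul, one_nsmul, add_comm]
      rw [h]
      exact hSadd s hs _ (ih hk)

lemma add_sum_memS {m : ℕ} {S : Set (Fin m → ℤ)}
    (hSadd : ∀ x ∈ S, ∀ y ∈ S, x + y ∈ S) :
    ∀ (G : Finset (Fin m → ℤ)) (p : (Fin m → ℤ) → ℕ), ↑G ⊆ S →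
    ∀ s ∈ S, s + ∑ a ∈ G, p a • a ∈ S := by
  intro G
  induction G using Finset.induction_on with
  | empty => intro p _ s hs; simpa using hs
    | @insert a G' hna ih =>
    intro p hsub s hs
    rw [Finset.sum_insert hna, ← add_assoc]
    have hG'sub : ↑G' ⊆ S := fun b hb => hsub (by simp [hb])
    rcases Nat.eq_zero_or_pos (p a) with h0 | hpa
    · rw [h0, zero_smul, add_zero]
      exact ih p hG'sub s hs
    · have haS : a ∈ S := hsub (by simp)
      have h : s + p a • a ∈ S := hSadd s hs _ (smul_memS hSadd haS (p a) hpa)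
      exact ih p hG'sub _ h

lemma sum_memS {m : ℕ} {S : Set (Fin m → ℤ)}
    (hSadd : ∀ x ∈ S, ∀ y ∈ S, x + y ∈ S)
    (G : Finset (Fin m → ℤ)) (p : (Fin m → ℤ) → ℕ) (hsub : ↑G ⊆ S)
    {b : Fin m → ℤ} (hb : b ∈ G) (hpb : 0 < p b) :
    ∑ a ∈ G, p a • a ∈ S := by
  rw [← Finset.add_sum_erase G _ hb]
  have hbS : b ∈ S := hsub hb
  have herase : ↑(G.erase b) ⊆ S := fun c hc => hsub (Finset.mem_of_mem_erase hc)
  exact add_sum_memS hSadd (G.erase b) p herase _ (smul_memS hSadd hbS (p b) hpb)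

lemma den_mul_self (r : ℚ) : (r.den : ℚ) * r = (r.num : ℚ) := by
  have hden : ((r.den : ℚ)) ≠ 0 := by exact_mod_cast r.den_nz
  rw [mul_comm]
  exact ((div_eq_iff hden).mp (Rat.num_div_den r)).symm

lemma clear_denoms {m : ℕ} (G : Finset (Fin m → ℤ)) (c : (Fin m → ℤ) → ℚ)
    (hc : ∀ a ∈ G, 0 ≤ c a) :
    ∃ q : ℕ, 0 < q ∧ ∃ p : (Fin m → ℤ) → ℕ, ∀ a ∈ G, (p a : ℚ) = (q : ℚ) * c a := by
  refine ⟨∏ a ∈ G, (c a).den, Finset.prod_pos (fun a _ => (c a).pos), ?_⟩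
  refine ⟨fun a => ((∏ b ∈ G, (c b).den) / (c a).den) * (c a).num.toNat, ?_⟩
  intro a ha
  have hdvd : (c a).den ∣ ∏ b ∈ G, (c b).den := Finset.dvd_prod_of_mem _ ha
  have hq : ((∏ b ∈ G, (c b).den) / (c a).den) * (c a).den = ∏ b ∈ G, (c b).den :=
    Nat.div_mul_cancel hdvd
  have hnum : (((c a).num.toNat : ℤ) : ℚ) = ((c a).num : ℚ) := by
    exact_mod_cast congrArg (fun z : ℤ => (z : ℚ))
      (Int.toNat_of_nonneg (Rat.num_nonneg.mpr (hc a ha)))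
  calc ((((∏ b ∈ G, (c b).den) / (c a).den) * (c a).num.toNat : ℕ) : ℚ)
      = (((∏ b ∈ G, (c b).den) / (c a).den : ℕ) : ℚ) * (((c a).num.toNat : ℤ) : ℚ) := by
        push_cast; ring
    _ = (((∏ b ∈ G, (c b).den) / (c a).den : ℕ) : ℚ) * (((c a).den : ℚ) * c a) := by
        rw [hnum, den_mul_self]
    _ = ((((∏ b ∈ G, (c b).den) / (c a).den) * (c a).den : ℕ) : ℚ) * c a := by
        push_cast; ring
    _ = ((∏ b ∈ G, (c b).den : ℕ) : ℚ) * c a := by rw [hq]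

/-- every rational point of the asymptotic cone `O = rint(cone(S))`
belongs to `S*`. -/
theorem stmt9 {m : ℕ} (S : Set (Fin m → ℤ)) (hSne : S.Nonempty)
    (hSadd : ∀ x ∈ S, ∀ y ∈ S, x + y ∈ S) :
    ∀ x ∈ intrinsicInterior ℝ (coneHull (zc '' S)),
      (∀ i, ∃ r : ℚ, x i = (r : ℝ)) → x ∈ Sstar S := by
  intro x hx hrat
  choose xq hxq using hrat
  have hxC : x ∈ coneHull (zc '' S) := intrinsicInterior_subset hx
  obtain ⟨G, hGS, w, hw, hrep⟩ := coneHull_rep hxC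
  obtain ⟨c, hc0, hcx⟩ := ratSol G.card G rfl xq w hw
    (fun i => by rw [← hxq i]; exact hrep i)
  by_cases hne : ∃ b ∈ G, 0 < c b
  · obtain ⟨b, hbG, hcb⟩ := hne
    obtain ⟨q, hq, p, hp⟩ := clear_denoms G c hc0
    have hpb : 0 < p b := by
      have h1 : (0:ℚ) < (p b : ℚ) := by
        rw [hp b hbG]
        exact mul_pos (by exact_mod_cast hq) hcb
      exact_mod_cast h1
    refine ⟨q, hq, ∑ a ∈ G, p a • a, sum_memS hSadd G p hGS hbG hpb, ?_⟩
    funext i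
    have key : (q:ℚ) * xq i = ∑ a ∈ G, (p a : ℚ) * ((a i : ℤ) : ℚ) := by
      rw [hcx i, Finset.mul_sum]
      apply Finset.sum_congr rfl
      intro a ha
      rw [hp a ha]
      ring
    have hzsum : (((∑ a ∈ G, p a • a) i : ℤ) : ℝ) = ∑ a ∈ G, (p a : ℝ) * ((a i : ℤ) : ℝ) := by
      rw [Finset.sum_apply]
      push_cast [Pi.smul_apply, nsmul_eq_mul]
      rfl
    show (q:ℝ) * x i = (((∑ a ∈ G, p a • a) i : ℤ) : ℝ)
    rw [hxq i, hzsum]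
    exact_mod_cast key
  · -- all coefficients zero: x = 0
    push_neg at hne
    have hc0' : ∀ a ∈ G, c a = 0 := fun a ha => le_antisymm (hne a ha) (hc0 a ha)
    have hx0q : ∀ i, xq i = 0 := by
      intro i
      rw [hcx i]
      exact Finset.sum_eq_zero fun a ha => by rw [hc0' a ha, zero_mul]
    have hx0 : x = 0 := funext fun i => by rw [hxq i, hx0q i]; simp
    by_cases hS0 : ∃ s1 ∈ S, s1 ≠ 0
    · obtain ⟨s1, hs1, _⟩ := hS0
      have hbC : zc s1 ∈ coneHull (zc '' S) := by
        refine ⟨{zc s1}, fun _ => 1, ?_, by simp, by simp⟩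
        intro v hv
        simp only [Finset.coe_singleton, Set.mem_singleton_iff] at hv
        subst hv
        exact ⟨s1, hs1, rfl⟩
      obtain ⟨t, ht, htC⟩ := stretch hx hbC
      obtain ⟨G₂, hG₂S, v, hv, hrep₂⟩ := coneHull_rep htC
      set x2 : Fin m → ℚ := fun i => -(t * (s1 i : ℚ)) with hx2def
      have hx2cast : ∀ i, (x2 i : ℝ) = ∑ a ∈ G₂, v a * ((a i : ℤ) : ℝ) := by
        intro i
        rw [← hrep₂ i, hx0]
        simp [hx2def, zc]
      obtain ⟨c₂, hc₂0, hc₂⟩ := ratSol G₂.card G₂ rfl x2 v hv hx2cast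
      obtain ⟨q, hqpos, p, hp⟩ := clear_denoms G₂ c₂ hc₂0
      set k : ℕ := q * t.num.toNat with hkdef
      have hnum : ((t.num.toNat : ℕ) : ℚ) = (t.num : ℚ) := by
        exact_mod_cast Int.toNat_of_nonneg (le_of_lt (Rat.num_pos.mpr ht))
      have hkq : (k:ℚ) = (q:ℚ) * ((t.den:ℚ) * t) := by
        rw [den_mul_self, hkdef]
        push_cast [hnum]
        ring
      have hk0 : 0 < k := by
        have h1 : (0:ℤ) < t.num := Rat.num_pos.mpr ht
        have h2 : 0 < t.num.toNat := by omega
        exact Nat.mul_pos hqpos h2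
      set s0 : Fin m → ℤ := k • s1 + ∑ a ∈ G₂, (t.den * p a) • a with hs0def
      have hs0S : s0 ∈ S :=
        add_sum_memS hSadd G₂ _ hG₂S _ (smul_memS hSadd hs1 k hk0)
      have hs0eq : s0 = 0 := by
        funext i
        have hterm : ∀ a ∈ G₂, ((t.den * p a : ℕ):ℚ) * ((a i : ℤ) : ℚ)
            = ((t.den:ℚ) * (q:ℚ)) * (c₂ a * ((a i : ℤ):ℚ)) := by
          intro a ha
          push_cast [hp a ha]
          ring
        have hsum2 : ∑ a ∈ G₂, ((t.den * p a : ℕ):ℚ) * ((a i : ℤ) : ℚ)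
            = ((t.den:ℚ) * (q:ℚ)) * x2 i := by
          rw [Finset.sum_congr rfl hterm, ← Finset.mul_sum, ← hc₂ i]
        have hQ : ((s0 i : ℤ) : ℚ)
            = (k:ℚ) * ((s1 i : ℤ):ℚ) + ∑ a ∈ G₂, ((t.den * p a : ℕ):ℚ) * ((a i : ℤ) : ℚ) := by
          rw [hs0def]
          simp only [Pi.add_apply, Pi.smul_apply, Finset.sum_apply, nsmul_eq_mul,
            Pi.mul_apply, Pi.natCast_apply]
          push_cast
          ring
        have : ((s0 i : ℤ) : ℚ) = 0 := by
          rw [hQ, hsum2, hkq, hx2def]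
          simp only
          ring
        exact_mod_cast this
      rw [hs0eq] at hs0S
      refine ⟨1, one_pos, 0, hs0S, ?_⟩
      funext i
      rw [hx0]
      simp [zc]
    · push_neg at hS0
      obtain ⟨s0, hs0⟩ := hSne
      refine ⟨1, one_pos, s0, hs0, ?_⟩
      funext i
      rw [hx0, hS0 s0 hs0]
      simp [zc]
end
end
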